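/- Let A be a unital complex Banach algebra and let x, y ∈ A. Then exp(x + y)·exp(−x) = Σ_{n=0}^∞ ∫_{S_n} α_{u_1}(y)·α_{u_2}(y)⋯α_{u_n}(y) du, where α_u(y) = exp(u·x)·y·exp(−u·x), S_n = {(u_1,…,u_n) : 0 ≤ u_1 ≤ u_2 ≤ … ≤ u_n ≤ 1} is the standard n-simplex with its Lebesgue measure, the n = 0 term is 1, and the series converges absolutely in A. -/

import Mathlib

open MeasureTheory

/-- The `n`-th term of the expansional (Araki/Dyson) series:
`∫_{0 ≤ u_1 ≤ … ≤ u_n ≤ 1} α_{u_1}(y) ⋯ α_{u_n}(y) du` where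
`α_u(y) = exp(u x) y exp(−u x)`. -/
noncomputable def expansionalTerm {A : Type*} [NormedRing A] [NormedAlgebra ℂ A]
    [CompleteSpace A] (x y : A) (n : ℕ) : A :=
  ∫ u in {u : Fin n → ℝ | (∀ i, 0 ≤ u i ∧ u i ≤ 1) ∧ Monotone u},
    (List.ofFn fun i : Fin n =>
      NormedSpace.exp ((u i) • x) * y * NormedSpace.exp (-((u i) • x))).prod

namespace ExpansionalAux
set_option linter.unusedSectionVars false

open NormedSpace intervalIntegral Filter

variable {A : Type*} [NormedRing A] [NormedAlgebra ℂ A] [CompleteSpace A]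

/-- `α_s(y) = exp(s x) y exp(-s x)`. -/
noncomputable def al (x y : A) (s : ℝ) : A := exp (s • x) * y * exp (-(s • x))

lemma continuous_al (x y : A) : Continuous (al x y) := by
  unfold al
  letI : NormedAlgebra ℚ A := NormedAlgebra.restrictScalars ℚ ℂ A
  exact ((exp_continuous.comp (continuous_id.smul continuous_const)).mul continuous_const).mul
    (exp_continuous.comp (continuous_id.smul continuous_const).neg)

/-- The order simplex with upper bound `t`. -/
def sset (n : ℕ) (t : ℝ) : Set (Fin n → ℝ) :=
  {u | (∀ i, 0 ≤ u i ∧ u i ≤ t) ∧ Monotone u}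

/-- The integrand. -/
noncomputable def itg (x y : A) (n : ℕ) (u : Fin n → ℝ) : A :=
  (List.ofFn fun i => al x y (u i)).prod

lemma continuous_itg (x y : A) (n : ℕ) : Continuous (itg x y n) := by
  unfold itg
  simp only [List.ofFn_eq_map]
  exact continuous_list_prod _ fun i _ => (continuous_al x y).comp (continuous_apply i)

lemma isClosed_sset (n : ℕ) (t : ℝ) : IsClosed (sset n t) := by
  have h1 : IsClosed {u : Fin n → ℝ | ∀ i, 0 ≤ u i ∧ u i ≤ t} := by
    have : {u : Fin n → ℝ | ∀ i, 0 ≤ u i ∧ u i ≤ t} =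
        ⋂ i, ({u : Fin n → ℝ | 0 ≤ u i} ∩ {u | u i ≤ t}) := by
      ext u; simp [Set.mem_iInter, forall_and]
    rw [this]
    exact isClosed_iInter fun i =>
      (isClosed_le continuous_const (continuous_apply i)).inter
        (isClosed_le (continuous_apply i) continuous_const)
  have h2 : IsClosed {u : Fin n → ℝ | Monotone u} := by
    have : {u : Fin n → ℝ | Monotone u} =
        ⋂ (i) (j) (_ : i ≤ j), {u : Fin n → ℝ | u i ≤ u j} := by
      ext u; simp [Monotone, Set.mem_iInter]
    rw [this]
    exact isClosed_iInter fun i => isClosed_iInter fun j => isClosed_iInter fun _ =>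
      isClosed_le (continuous_apply i) (continuous_apply j)
  exact h1.inter h2

lemma isCompact_sset (n : ℕ) (t : ℝ) : IsCompact (sset n t) := by
  refine IsCompact.of_isClosed_subset (isCompact_Icc
    (a := fun _ : Fin n => (0:ℝ)) (b := fun _ => max t 0)) (isClosed_sset n t) ?_
  rintro u ⟨hb, -⟩
  exact ⟨fun i => (hb i).1, fun i => le_max_of_le_left (hb i).2⟩

lemma measurableSet_sset (n : ℕ) (t : ℝ) : MeasurableSet (sset n t) :=
  (isClosed_sset n t).measurableSet

lemma integrableOn_itg (x y : A) (n : ℕ) (t : ℝ) :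
    IntegrableOn (itg x y n) (sset n t) :=
  (continuous_itg x y n).continuousOn.integrableOn_compact (isCompact_sset n t)

lemma sset_snoc {n : ℕ} {t s : ℝ} (hs : 0 ≤ s) (hst : s ≤ t) (v : Fin n → ℝ) :
    Fin.snoc v s ∈ sset (n + 1) t ↔ v ∈ sset n s := by
  constructor
  · rintro ⟨hb, hm⟩
    refine ⟨fun i => ⟨?_, ?_⟩, fun i j hij => ?_⟩
    · have := (hb i.castSucc).1; rwa [Fin.snoc_castSucc] at this
    · have := hm (Fin.le_last i.castSucc); rwa [Fin.snoc_castSucc, Fin.snoc_last] at this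
    · have := hm (Fin.castSucc_le_castSucc_iff.mpr hij)
      rwa [Fin.snoc_castSucc, Fin.snoc_castSucc] at this
  · rintro ⟨hb, hm⟩
    refine ⟨fun i => ?_, fun i j hij => ?_⟩
    · by_cases hi : i = Fin.last n
      · subst hi; rw [Fin.snoc_last]; exact ⟨hs, hst⟩
      · obtain ⟨m, rfl⟩ := Fin.eq_castSucc_of_ne_last hi
        rw [Fin.snoc_castSucc]; exact ⟨(hb m).1, le_trans (hb m).2 hst⟩
    · by_cases hj : j = Fin.last n
      · subst hj
        rw [Fin.snoc_last]
        by_cases hi : i = Fin.last n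
        · subst hi; rw [Fin.snoc_last]
        · obtain ⟨m, rfl⟩ := Fin.eq_castSucc_of_ne_last hi
          rw [Fin.snoc_castSucc]; exact (hb m).2
      · obtain ⟨k, rfl⟩ := Fin.eq_castSucc_of_ne_last hj
        have hi : i ≠ Fin.last n := by
          rintro rfl
          exact absurd (lt_of_le_of_lt hij (Fin.castSucc_lt_last k)) (lt_irrefl _)
        obtain ⟨m, rfl⟩ := Fin.eq_castSucc_of_ne_last hi
        rw [Fin.snoc_castSucc, Fin.snoc_castSucc]
        exact hm (Fin.castSucc_le_castSucc_iff.mp hij)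

lemma itg_snoc (x y : A) {n : ℕ} (v : Fin n → ℝ) (s : ℝ) :
    itg x y (n + 1) (Fin.snoc v s) = itg x y n v * al x y s := by
  unfold itg
  rw [List.ofFn_succ', List.prod_concat]
  simp [Fin.snoc_castSucc, Fin.snoc_last]


lemma G_succ (x y : A) (n : ℕ) {t : ℝ} (ht : 0 ≤ t) :
    (∫ u in sset (n + 1) t, itg x y (n + 1) u) =
      ∫ s in (0:ℝ)..t, (∫ v in sset n s, itg x y n v) * al x y s := by
  have hmeas := measurableSet_sset (n + 1) t
  rw [← MeasureTheory.integral_indicator hmeas]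
  set e := MeasurableEquiv.piFinSuccAbove (fun _ : Fin (n + 1) => ℝ) (Fin.last n) with he
  have hmp : MeasurePreserving e volume (volume.prod volume) :=
    measurePreserving_piFinSuccAbove (fun _ : Fin (n + 1) => volume) (Fin.last n)
  have hInd : Integrable ((sset (n + 1) t).indicator (itg x y (n + 1))) volume :=
    (integrableOn_itg x y (n + 1) t).integrable_indicator hmeas
  have h1 : (∫ u, (sset (n + 1) t).indicator (itg x y (n + 1)) u) =
      ∫ p : ℝ × (Fin n → ℝ),
        (sset (n + 1) t).indicator (itg x y (n + 1)) (e.symm p) ∂(volume.prod volume) :=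
    ((MeasurePreserving.symm e hmp).integral_comp' _).symm
  rw [h1]
  have hInt2 : Integrable
      (fun p : ℝ × (Fin n → ℝ) => (sset (n + 1) t).indicator (itg x y (n + 1)) (e.symm p))
      (volume.prod volume) :=
    ((MeasurePreserving.symm e hmp).integrable_comp_emb e.symm.measurableEmbedding).mpr hInd
  rw [MeasureTheory.integral_prod _ hInt2]
  have hsymm : ∀ (s : ℝ) (v : Fin n → ℝ), e.symm (s, v) = Fin.snoc v s := by
    intro s v
    rw [he]
    simp [MeasurableEquiv.piFinSuccAbove_symm_apply, Fin.snocEquiv]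
  have hiter : ∀ s : ℝ,
      (∫ v, (sset (n + 1) t).indicator (itg x y (n + 1)) (e.symm (s, v))) =
        (Set.Icc (0:ℝ) t).indicator
          (fun s => (∫ v in sset n s, itg x y n v) * al x y s) s := by
    intro s
    simp only [hsymm]
    by_cases hs : s ∈ Set.Icc (0:ℝ) t
    · rw [Set.indicator_of_mem hs]
      have h2 : ∀ v : Fin n → ℝ, (sset (n + 1) t).indicator (itg x y (n + 1)) (Fin.snoc v s)
          = (sset n s).indicator (fun v => itg x y n v * al x y s) v := by
        intro v
        by_cases hv : v ∈ sset n s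
        · rw [Set.indicator_of_mem ((sset_snoc hs.1 hs.2 v).mpr hv), Set.indicator_of_mem hv,
            itg_snoc]
        · rw [Set.indicator_of_notMem (fun h => hv ((sset_snoc hs.1 hs.2 v).mp h)),
            Set.indicator_of_notMem hv]
      simp_rw [h2]
      rw [MeasureTheory.integral_indicator (measurableSet_sset n s)]
      have hL := (((ContinuousLinearMap.mul ℝ A).flip (al x y s)).integral_comp_comm
        (integrableOn_itg x y n s))
      simpa using hL
    · rw [Set.indicator_of_notMem hs]
      have h2 : ∀ v : Fin n → ℝ,
          (sset (n + 1) t).indicator (itg x y (n + 1)) (Fin.snoc v s) = 0 := by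
        intro v
        apply Set.indicator_of_notMem
        rintro ⟨hb, -⟩
        have h3 := hb (Fin.last n)
        rw [Fin.snoc_last] at h3
        exact hs ⟨h3.1, h3.2⟩
      simp_rw [h2]
      exact integral_zero _ _
  simp_rw [hiter]
  rw [MeasureTheory.integral_indicator measurableSet_Icc, integral_Icc_eq_integral_Ioc,
    ← intervalIntegral.integral_of_le ht]


/-- Iterated time-ordered integrals. -/
noncomputable def Hh (x y : A) : ℕ → ℝ → A
  | 0 => fun _ => 1
  | (n + 1) => fun t => ∫ s in (0:ℝ)..t, Hh x y n s * al x y s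

lemma continuous_Hh (x y : A) : ∀ n, Continuous (Hh x y n)
  | 0 => continuous_const
  | (n + 1) => by
      show Continuous fun t => ∫ s in (0:ℝ)..t, Hh x y n s * al x y s
      exact intervalIntegral.continuous_primitive
        (fun a b => ((continuous_Hh x y n).mul (continuous_al x y)).intervalIntegrable a b) 0

lemma G_eq_Hh (x y : A) : ∀ n, ∀ t : ℝ, 0 ≤ t →
    (∫ u in sset n t, itg x y n u) = Hh x y n t
  | 0, t, ht => by
    have hset : sset 0 t = Set.univ := by
      refine Set.eq_univ_iff_forall.mpr fun u => ⟨fun i => i.elim0, fun a b _ => ?_⟩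
      exact le_of_eq (congrArg u (Subsingleton.elim a b))
    have hone : (volume : Measure (Fin 0 → ℝ)) Set.univ = 1 := by
      rw [volume_pi, Measure.pi_univ]
      simp
    have hitg : ∀ u : Fin 0 → ℝ, itg x y 0 u = 1 := by
      intro u; simp [itg]
    rw [hset]
    simp only [Measure.restrict_univ]
    rw [show (fun u : Fin 0 → ℝ => itg x y 0 u) = fun _ => (1:A) from funext hitg] at *
    rw [MeasureTheory.integral_const, measureReal_def, hone]
    simp [Hh]
  | (n + 1), t, ht => by
    rw [G_succ x y n ht]
    show _ = ∫ s in (0:ℝ)..t, Hh x y n s * al x y s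
    refine intervalIntegral.integral_congr fun s hs => ?_
    rw [Set.uIcc_of_le ht] at hs
    rw [G_eq_Hh x y n s hs.1]

/-- `E(t) = exp(t(x+y)) exp(-tx)`. -/
noncomputable def Ef (x y : A) (t : ℝ) : A := exp (t • (x + y)) * exp (-(t • x))

lemma continuous_Ef (x y : A) : Continuous (Ef x y) := by
  unfold Ef
  letI : NormedAlgebra ℚ A := NormedAlgebra.restrictScalars ℚ ℂ A
  exact (exp_continuous.comp (continuous_id.smul continuous_const)).mul
    (exp_continuous.comp (continuous_id.smul continuous_const).neg)

lemma hasDerivAt_Ef (x y : A) (t : ℝ) :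
    HasDerivAt (Ef x y) (Ef x y t * al x y t) t := by
  letI : NormedAlgebra ℚ A := NormedAlgebra.restrictScalars ℚ ℂ A
  have d1 : HasDerivAt (fun u : ℝ => exp (u • (x + y))) (exp (t • (x + y)) * (x + y)) t := by
    have := hasDerivAt_exp_smul_const (𝕂 := ℝ) (x + y) t
    exact this
  have d2 : HasDerivAt (fun u : ℝ => exp (-(u • x))) (-x * exp (-(t • x))) t := by
    have := hasDerivAt_exp_smul_const' (𝕂 := ℝ) (-x) t
    simp only [smul_neg] at this
    exact this
  have hd := d1.mul d2
  have hinv : exp (-(t • x)) * exp (t • x) = 1 := by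
    rw [← exp_add_of_commute (Commute.refl (t • x)).neg_left, neg_add_cancel, exp_zero]
  have key : Ef x y t * al x y t =
      exp (t • (x + y)) * (x + y) * exp (-(t • x)) +
        exp (t • (x + y)) * (-x * exp (-(t • x))) := by
    have h1 : Ef x y t * al x y t
        = exp (t • (x + y)) * ((exp (-(t • x)) * exp (t • x)) * (y * exp (-(t • x)))) := by
      simp only [Ef, al, mul_assoc]
    rw [h1, hinv, one_mul]
    noncomm_ring
  rw [key]
  exact hd

lemma Ef_eq (x y : A) (t : ℝ) :
    Ef x y t = 1 + ∫ s in (0:ℝ)..t, Ef x y s * al x y s := by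
  have h := intervalIntegral.integral_eq_sub_of_hasDerivAt
    (f := Ef x y) (f' := fun s => Ef x y s * al x y s) (a := 0) (b := t)
    (fun s _ => hasDerivAt_Ef x y s)
    (((continuous_Ef x y).mul (continuous_al x y)).intervalIntegrable 0 t)
  have h0 : Ef x y 0 = 1 := by
    simp [Ef]
  rw [h, h0]
  abel

/-- Remainder. -/
noncomputable def Rr (x y : A) (N : ℕ) (t : ℝ) : A :=
  Ef x y t - ∑ n ∈ Finset.range N, Hh x y n t

lemma continuous_Rr (x y : A) (N : ℕ) : Continuous (Rr x y N) := by
  unfold Rr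
  exact (continuous_Ef x y).sub (continuous_finset_sum _ fun n _ => continuous_Hh x y n)

lemma Rr_succ (x y : A) : ∀ N (t : ℝ),
    Rr x y (N + 1) t = ∫ s in (0:ℝ)..t, Rr x y N s * al x y s
  | 0, t => by
    have h1 : Rr x y 1 t = Ef x y t - 1 := by
      simp [Rr, Finset.sum_range_one, Hh]
    have h2 : ∀ s : ℝ, Rr x y 0 s = Ef x y s := by
      intro s; simp [Rr]
    simp only [h1, h2]
    rw [Ef_eq x y t]
    abel
  | (N + 1), t => by
    have h1 : Rr x y (N + 2) t = Rr x y (N + 1) t - Hh x y (N + 1) t := by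
      simp only [Rr, Finset.sum_range_succ]
      abel
    rw [h1, Rr_succ x y N t]
    have hH : Hh x y (N + 1) t = ∫ s in (0:ℝ)..t, Hh x y N s * al x y s := rfl
    rw [hH, ← intervalIntegral.integral_sub (f := fun s => Rr x y N s * al x y s)
      (g := fun s => Hh x y N s * al x y s)
      (((continuous_Rr x y N).mul (continuous_al x y)).intervalIntegrable 0 t)
      (((continuous_Hh x y N).mul (continuous_al x y)).intervalIntegrable 0 t)]
    refine intervalIntegral.integral_congr fun s _ => ?_
    rw [← sub_mul]
    congr 1
    simp only [Rr, Finset.sum_range_succ]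
    abel


lemma integral_bound_step (C M : ℝ) (n : ℕ) (t : ℝ) :
    (∫ s in (0:ℝ)..t, (C * M ^ n * s ^ n / n.factorial) * M) =
      C * M ^ (n + 1) * t ^ (n + 1) / (n + 1).factorial := by
  have hfun : (fun s : ℝ => (C * M ^ n * s ^ n / n.factorial) * M)
      = fun s : ℝ => (C * M ^ n * M / n.factorial) * s ^ n := by
    funext s; ring
  rw [hfun, intervalIntegral.integral_const_mul, integral_pow]
  have h1 : ((n : ℝ) + 1) ≠ 0 := by positivity
  have h2 : ((n.factorial : ℝ)) ≠ 0 := Nat.cast_ne_zero.mpr n.factorial_ne_zero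
  rw [Nat.factorial_succ]
  push_cast
  field_simp
  ring

lemma iter_bound (x y : A) {M C : ℝ} (hM0 : 0 ≤ M)
    (hM : ∀ s ∈ Set.Icc (0:ℝ) 1, ‖al x y s‖ ≤ M) (hC : 0 ≤ C)
    {f : ℕ → ℝ → A} (hcont : ∀ n, Continuous (f n))
    (hf0 : ∀ t ∈ Set.Icc (0:ℝ) 1, ‖f 0 t‖ ≤ C)
    (hfs : ∀ n (t : ℝ), f (n + 1) t = ∫ s in (0:ℝ)..t, f n s * al x y s) :
    ∀ n, ∀ t : ℝ, 0 ≤ t → t ≤ 1 → ‖f n t‖ ≤ C * M ^ n * t ^ n / n.factorial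
  | 0, t, ht0, ht1 => by
    simpa using hf0 t ⟨ht0, ht1⟩
  | (n + 1), t, ht0, ht1 => by
    rw [hfs n t]
    have hbound : ∀ᵐ s ∂(volume.restrict (Set.uIoc (0:ℝ) t)),
        ‖f n s * al x y s‖ ≤ (C * M ^ n * s ^ n / n.factorial) * M := by
      refine Filter.eventually_of_mem (ae_restrict_mem measurableSet_uIoc) fun s hs => ?_
      rw [Set.uIoc_of_le ht0] at hs
      have hs0 : 0 ≤ s := le_of_lt hs.1
      have hs1 : s ≤ 1 := le_trans hs.2 ht1
      calc ‖f n s * al x y s‖ ≤ ‖f n s‖ * ‖al x y s‖ := norm_mul_le _ _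
        _ ≤ (C * M ^ n * s ^ n / n.factorial) * M := by
            refine mul_le_mul (iter_bound x y hM0 hM hC hcont hf0 hfs n s hs0 hs1)
              (hM s ⟨hs0, hs1⟩) (norm_nonneg _) ?_
            positivity
    have hgint : IntervalIntegrable
        (fun s : ℝ => (C * M ^ n * s ^ n / n.factorial) * M) volume 0 t := by
      apply Continuous.intervalIntegrable
      continuity
    calc ‖∫ s in (0:ℝ)..t, f n s * al x y s‖
        ≤ |∫ s in (0:ℝ)..t, (C * M ^ n * s ^ n / n.factorial) * M| :=
          intervalIntegral.norm_integral_le_abs_of_norm_le hbound hgint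
      _ = C * M ^ (n + 1) * t ^ (n + 1) / (n + 1).factorial := by
          rw [integral_bound_step]
          refine abs_of_nonneg ?_
          positivity

end ExpansionalAux

open ExpansionalAux Filter in
/-- Expansional formula: in a unital complex Banach algebra,
`exp(x+y) exp(−x) = Σ_n ∫_{S_n} α_{u_1}(y) ⋯ α_{u_n}(y) du`, where
`α_u(y) = exp(u x) y exp(−u x)`, the `n = 0` term is `1`, and the series converges
absolutely. -/
theorem expansional_formula {A : Type*} [NormedRing A] [NormedAlgebra ℂ A]
    [CompleteSpace A] (x y : A) :
    Summable (fun n : ℕ => ‖expansionalTerm x y n‖) ∧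
    NormedSpace.exp (x + y) * NormedSpace.exp (-x) = ∑' n : ℕ, expansionalTerm x y n := by
  have hterm : ∀ n, expansionalTerm x y n = Hh x y n 1 := by
    intro n
    have h : expansionalTerm x y n = ∫ u in sset n 1, itg x y n u := rfl
    rw [h, G_eq_Hh x y n 1 zero_le_one]
  obtain ⟨M, hM⟩ := (isCompact_Icc (a := (0:ℝ)) (b := 1)).exists_bound_of_continuousOn
    (continuous_al x y).continuousOn
  have hM0 : 0 ≤ M := le_trans (norm_nonneg _) (hM 0 ⟨le_refl 0, zero_le_one⟩)
  obtain ⟨CE, hCE⟩ := (isCompact_Icc (a := (0:ℝ)) (b := 1)).exists_bound_of_continuousOn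
    (continuous_Ef x y).continuousOn
  have hCE0 : 0 ≤ CE := le_trans (norm_nonneg _) (hCE 0 ⟨le_refl 0, zero_le_one⟩)
  have hHbound : ∀ n, ‖Hh x y n 1‖ ≤ ‖(1:A)‖ * (M ^ n / n.factorial) := by
    intro n
    have := iter_bound x y hM0 hM (norm_nonneg (1:A)) (continuous_Hh x y)
      (fun t _ => le_of_eq rfl) (fun n t => rfl) n 1 zero_le_one le_rfl
    simpa [mul_div_assoc] using this
  have hsummable_aux : Summable (fun n => ‖(1:A)‖ * (M ^ n / n.factorial)) :=
    (Real.summable_pow_div_factorial M).mul_left _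
  have hsn : Summable (fun n : ℕ => ‖expansionalTerm x y n‖) := by
    refine Summable.of_nonneg_of_le (fun n => norm_nonneg _) (fun n => ?_) hsummable_aux
    rw [hterm n]; exact hHbound n
  refine ⟨hsn, ?_⟩
  have hsum : Summable (fun n : ℕ => expansionalTerm x y n) := hsn.of_norm
  have htends1 : Tendsto (fun N => ∑ n ∈ Finset.range N, expansionalTerm x y n) atTop
      (nhds (∑' n : ℕ, expansionalTerm x y n)) := hsum.hasSum.tendsto_sum_nat
  have hRbound : ∀ N : ℕ, ‖Rr x y N 1‖ ≤ CE * (M ^ N / N.factorial) := by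
    intro N
    have := iter_bound x y hM0 hM hCE0 (continuous_Rr x y)
      (fun t ht => by simpa [Rr] using hCE t ht) (Rr_succ x y) N 1 zero_le_one le_rfl
    simpa [mul_div_assoc] using this
  have hR0 : Tendsto (fun N => Rr x y N 1) atTop (nhds 0) := by
    rw [tendsto_zero_iff_norm_tendsto_zero]
    refine squeeze_zero (fun N => norm_nonneg _) hRbound ?_
    have := (Real.summable_pow_div_factorial M).tendsto_atTop_zero.const_mul CE
    simpa using this
  have htends2 : Tendsto (fun N => ∑ n ∈ Finset.range N, expansionalTerm x y n) atTop
      (nhds (Ef x y 1)) := by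
    have heq : (fun N => ∑ n ∈ Finset.range N, expansionalTerm x y n)
        = fun N => Ef x y 1 - Rr x y N 1 := by
      funext N
      rw [Finset.sum_congr rfl fun n _ => hterm n]
      simp only [Rr]
      abel
    rw [heq]
    simpa using tendsto_const_nhds.sub hR0
  have hfin := tendsto_nhds_unique htends2 htends1
  rw [← hfin]
  simp [Ef, one_smul]
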